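/- Let φ₁, φ₂ ∈ Homeo₊(ℝ). If there exists ψ ∈ Homeo₊(ℝ) with ψ(Fix(φ₁)) = Fix(φ₂) and ψ(Inc(φ₁)) = Inc(φ₂), then φ₁ and φ₂ are conjugate in Homeo₊(ℝ), i.e. there exists ψ̄ ∈ Homeo₊(ℝ) with ψ̄ ∘ φ₁ ∘ ψ̄⁻¹ = φ₂. -/

import Mathlib

/-- The set of fixed points of an orientation preserving homeomorphism of the line. -/
def FixedPts (φ : ℝ ≃o ℝ) : Set ℝ := {x | φ x = x}

/-- The set of points moved to the right. -/
def IncPts (φ : ℝ ≃o ℝ) : Set ℝ := {x | x < φ x}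

namespace WeakConjAux
open Set

noncomputable section

lemma mul_apply (f g : ℝ ≃o ℝ) (x : ℝ) : (f * g) x = f (g x) := rfl
lemma inv_apply (f : ℝ ≃o ℝ) (x : ℝ) : f⁻¹ x = f.symm x := rfl

lemma zpow_succ_apply (f : ℝ ≃o ℝ) (n : ℤ) (x : ℝ) : (f^(n+1)) x = (f^n) (f x) := by
  rw [zpow_add_one]; rfl

lemma zpow_succ_apply' (f : ℝ ≃o ℝ) (n : ℤ) (x : ℝ) : (f^(n+1)) x = f ((f^n) x) := by
  rw [add_comm, zpow_add, zpow_one]; rfl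

lemma zpow_neg_apply (f : ℝ ≃o ℝ) (n : ℤ) (x : ℝ) : (f^n) ((f^(-n)) x) = x := by
  rw [← mul_apply, ← zpow_add, add_neg_cancel, zpow_zero]; rfl

lemma fixed_inv (φ : ℝ ≃o ℝ) : FixedPts φ⁻¹ = FixedPts φ := by
  ext x
  simp only [FixedPts, mem_setOf_eq, inv_apply]
  constructor
  · intro h; conv_lhs => rw [← h]
    simp
  · intro h; conv_lhs => rw [← h]
    simp

lemma pow_fixed (φ : ℝ ≃o ℝ) {x : ℝ} (h : x ∈ FixedPts φ) (n : ℕ) : (φ^n) x = x := by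
  induction n with
  | zero => rfl
  | succ k ih => rw [pow_succ, mul_apply, h.out, ih]

lemma zpow_fixed (φ : ℝ ≃o ℝ) {x : ℝ} (h : x ∈ FixedPts φ) (n : ℤ) : (φ^n) x = x := by
  have hinv : x ∈ FixedPts φ⁻¹ := (fixed_inv φ).symm ▸ h
  cases n with
  | ofNat k => rw [Int.ofNat_eq_coe, zpow_natCast]; exact pow_fixed φ h k
  | negSucc k => rw [zpow_negSucc, ← inv_pow]; exact pow_fixed φ⁻¹ hinv (k+1)

lemma not_fixed_apply (φ : ℝ ≃o ℝ) {x : ℝ} (h : x ∉ FixedPts φ) : φ x ∉ FixedPts φ := by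
  intro hc
  exact h (by simpa [FixedPts] using φ.injective (hc : φ (φ x) = φ x))

lemma not_fixed_zpow (φ : ℝ ≃o ℝ) {x : ℝ} (h : x ∉ FixedPts φ) (n : ℤ) :
    (φ^n) x ∉ FixedPts φ := by
  intro hc
  apply h
  have : (φ^(-n)) ((φ^n) x) ∈ FixedPts φ := by
    simp only [FixedPts, mem_setOf_eq] at hc ⊢
    have h2 := zpow_fixed φ hc (-n)
    calc φ ((φ^(-n)) ((φ^n) x)) = φ ((φ^(-n)) ((φ^n) x)) := rfl
    _ = (φ^(1 + -n)) ((φ^n) x) := by rw [zpow_add, zpow_one]; rfl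
    _ = (φ^(-n+1)) ((φ^n) x) := by rw [add_comm]
    _ = (φ^(-n)) (φ ((φ^n) x)) := by rw [zpow_succ_apply]
    _ = (φ^(-n)) ((φ^n) x) := by rw [hc]
  rwa [← mul_apply, ← zpow_add, neg_add_cancel, zpow_zero] at this

/-- The component of `x` in the complement of `F`. -/
def Comp (F : Set ℝ) (x : ℝ) : Set ℝ := {y | Set.uIcc x y ∩ F = ∅}

lemma self_mem_comp {F : Set ℝ} {x : ℝ} (hx : x ∉ F) : x ∈ Comp F x := by
  simp [Comp, Set.uIcc_self, Set.singleton_inter_eq_empty.2 hx]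

lemma not_mem_F_of_mem_comp {F : Set ℝ} {x y : ℝ} (h : y ∈ Comp F x) : y ∉ F := by
  intro hy
  have : y ∈ Set.uIcc x y ∩ F := ⟨Set.right_mem_uIcc, hy⟩
  simp only [Comp, mem_setOf_eq] at h
  rw [h] at this; exact this

lemma base_not_mem_F_of_mem_comp {F : Set ℝ} {x y : ℝ} (h : y ∈ Comp F x) : x ∉ F := by
  intro hx
  have : x ∈ Set.uIcc x y ∩ F := ⟨Set.left_mem_uIcc, hx⟩
  simp only [Comp, mem_setOf_eq] at h
  rw [h] at this; exact this

lemma comp_symm {F : Set ℝ} {x y : ℝ} (h : y ∈ Comp F x) : x ∈ Comp F y := by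
  simpa [Comp, Set.uIcc_comm] using h

lemma comp_trans {F : Set ℝ} {x y z : ℝ} (hy : y ∈ Comp F x) (hz : z ∈ Comp F y) :
    z ∈ Comp F x := by
  simp only [Comp, mem_setOf_eq, ← Set.subset_empty_iff] at *
  intro w hw
  rcases Set.uIcc_subset_uIcc_union_uIcc (b := y) hw.1 with h | h
  · exact hy ⟨h, hw.2⟩
  · exact hz ⟨h, hw.2⟩

lemma comp_congr {F : Set ℝ} {x y : ℝ} (h : y ∈ Comp F x) : Comp F y = Comp F x := by
  ext z
  exact ⟨fun hz => comp_trans h hz, fun hz => comp_trans (comp_symm h) hz⟩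

lemma mem_comp_of_between {F : Set ℝ} {x y₁ y₂ z : ℝ} (h1 : y₁ ∈ Comp F x)
    (h2 : y₂ ∈ Comp F x) (hl : y₁ ≤ z) (hr : z ≤ y₂) : z ∈ Comp F x := by
  have hz : z ∈ Set.uIcc y₁ y₂ := by
    rw [Set.mem_uIcc]; left; exact ⟨hl, hr⟩
  simp only [Comp, mem_setOf_eq, ← Set.subset_empty_iff] at *
  intro w hw
  rcases Set.uIcc_subset_uIcc_union_uIcc (b := y₁) hw.1 with h | h
  · exact h1 ⟨h, hw.2⟩
  · have hsub : Set.uIcc y₁ z ⊆ Set.uIcc y₁ y₂ :=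
      Set.uIcc_subset_uIcc Set.left_mem_uIcc (Set.mem_uIcc.2 (Or.inl ⟨hl, hr⟩))
    have hw' : w ∈ Set.uIcc y₁ y₂ := hsub h
    rcases Set.uIcc_subset_uIcc_union_uIcc (b := x) hw' with h' | h'
    · exact h1 ⟨Set.uIcc_comm y₁ x ▸ h', hw.2⟩
    · exact h2 ⟨h', hw.2⟩

/-- Stepping by `φ` stays in the same component. -/
lemma step_mem_comp (φ : ℝ ≃o ℝ) {x : ℝ} (hx : x ∉ FixedPts φ) :
    φ x ∈ Comp (FixedPts φ) x := by
  simp only [Comp, mem_setOf_eq, Set.eq_empty_iff_forall_notMem]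
  rintro z ⟨hz1, hz2⟩
  have hzf : φ z = z := hz2
  rcases lt_trichotomy x (φ x) with hlt | heq | hgt
  · rw [Set.mem_uIcc] at hz1
    rcases hz1 with ⟨h1, h2⟩ | ⟨h1, h2⟩
    · rcases eq_or_lt_of_le h1 with rfl | h1'
      · exact hx hzf
      · have : φ x < φ z := φ.strictMono h1'
        rw [hzf] at this
        exact absurd h2 (not_le.2 this)
    · exact absurd (h1.trans h2) (not_le.2 hlt)
  · exact hx heq.symm
  · rw [Set.mem_uIcc] at hz1
    rcases hz1 with ⟨h1, h2⟩ | ⟨h1, h2⟩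
    · exact absurd (h1.trans h2) (not_le.2 hgt)
    · rcases eq_or_lt_of_le h2 with h2' | h2'
      · exact hx (h2' ▸ hzf)
      · have : φ z < φ x := φ.strictMono h2'
        rw [hzf] at this
        exact absurd h1 (not_le.2 this)

/-- Integer orbit stays in the component. -/
lemma zpow_mem_comp (φ : ℝ ≃o ℝ) {t : ℝ} (ht : t ∉ FixedPts φ) (n : ℤ) :
    (φ^n) t ∈ Comp (FixedPts φ) t := by
  simp only [Comp, mem_setOf_eq, Set.eq_empty_iff_forall_notMem]
  rintro z ⟨hz1, hz2⟩
  have hzn : (φ^n) z = z := zpow_fixed φ hz2 n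
  have hnt : (φ^n) t ∉ FixedPts φ := not_fixed_zpow φ ht n
  rw [Set.mem_uIcc] at hz1
  rcases hz1 with ⟨h1, h2⟩ | ⟨h1, h2⟩
  · rcases eq_or_lt_of_le h1 with rfl | h1'
    · exact ht hz2
    · have : (φ^n) t < (φ^n) z := (φ^n).strictMono h1'
      rw [hzn] at this
      exact absurd h2 (not_le.2 this)
  · rcases eq_or_lt_of_le h2 with h2' | h2'
    · exact ht (h2' ▸ hz2)
    · have : (φ^n) z < (φ^n) t := (φ^n).strictMono h2'
      rw [hzn] at this
      exact absurd h1 (not_le.2 this)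

/-- Sign is constant on a component (IVT). -/
lemma sign_const (φ : ℝ ≃o ℝ) {x y : ℝ} (hx : x ∈ IncPts φ) (hy : y ∈ Comp (FixedPts φ) x) :
    y ∈ IncPts φ := by
  by_contra hy'
  have hyF : y ∉ FixedPts φ := not_mem_F_of_mem_comp hy
  have hylt : φ y < y := by
    rcases lt_trichotomy y (φ y) with h | h | h
    · exact absurd h hy'
    · exact absurd h.symm hyF
    · exact h
  have hcont : ContinuousOn (fun z => φ z - z) (Set.uIcc x y) :=
    (φ.continuous.sub continuous_id).continuousOn
  have h0 : (0:ℝ) ∈ Set.uIcc (φ x - x) (φ y - y) := by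
    rw [Set.mem_uIcc]
    right
    constructor
    · linarith [hylt]
    · linarith [hx.out]
  obtain ⟨z, hz1, hz2⟩ := intermediate_value_uIcc hcont h0
  simp only at hz2
  have hzf : φ z = z := by linarith
  have : z ∈ Set.uIcc x y ∩ FixedPts φ := ⟨hz1, hzf⟩
  simp only [Comp, mem_setOf_eq] at hy
  rw [hy] at this; exact this

/-- Orbit is strictly monotone in `n` for increasing points. -/
lemma orbit_strictMono (φ : ℝ ≃o ℝ) {t : ℝ} (ht : t ∈ IncPts φ) :
    StrictMono (fun n : ℤ => (φ^n) t) := by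
  apply strictMono_int_of_lt_succ
  intro n
  show (φ^n) t < (φ^(n+1)) t
  rw [zpow_succ_apply]
  exact (φ^n).strictMono ht.out

/-- Escape upwards. -/
lemma escape_up (φ : ℝ ≃o ℝ) {t y : ℝ} (ht : t ∈ IncPts φ) (htF : t ∉ FixedPts φ)
    (hy : y ∈ Comp (FixedPts φ) t) : ∃ k : ℕ, y < (φ^(k:ℤ)) t := by
  by_contra hc
  push_neg at hc
  set a : ℕ → ℝ := fun k => (φ^(k:ℤ)) t with ha
  have hmono : Monotone a := fun i j hij =>
    (orbit_strictMono φ ht).monotone (by exact_mod_cast hij)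
  have hbdd : BddAbove (Set.range a) := ⟨y, by rintro _ ⟨k, rfl⟩; exact hc k⟩
  have hbdd' : BddAbove (Set.range (fun k => a (k+1))) :=
    ⟨y, by rintro _ ⟨k, rfl⟩; exact hc (k+1)⟩
  set L := ⨆ k, a k with hL
  have hstep : ∀ k : ℕ, φ (a k) = a (k+1) := by
    intro k
    show φ ((φ^(k:ℤ)) t) = (φ^((k+1:ℕ):ℤ)) t
    rw [Nat.cast_add, Nat.cast_one, zpow_succ_apply']
  have hφL : φ L = L := by
    have h1 : φ L = ⨆ k, φ (a k) :=
      Monotone.map_ciSup_of_continuousAt (φ.continuous.continuousAt) φ.monotone hbdd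
    rw [h1]
    simp_rw [hstep]
    apply le_antisymm
    · exact ciSup_le fun k => le_ciSup hbdd (k+1)
    · exact ciSup_le fun k => (hmono (Nat.le_succ k)).trans (le_ciSup hbdd' k)
  have hLF : L ∈ FixedPts φ := hφL
  have htL : t ≤ L := by
    have : a 0 ≤ L := le_ciSup hbdd 0
    simpa [ha] using this
  have hLy : L ≤ y := ciSup_le hc
  have : L ∈ Set.uIcc t y ∩ FixedPts φ := ⟨Set.mem_uIcc.2 (Or.inl ⟨htL, hLy⟩), hLF⟩
  simp only [Comp, mem_setOf_eq] at hy
  rw [hy] at this; exact this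

/-- Escape downwards. -/
lemma escape_down (φ : ℝ ≃o ℝ) {t y : ℝ} (ht : t ∈ IncPts φ) (htF : t ∉ FixedPts φ)
    (hy : y ∈ Comp (FixedPts φ) t) : ∃ k : ℕ, (φ^(-(k:ℤ))) t < y := by
  by_contra hc
  push_neg at hc
  set b : ℕ → ℝ := fun k => (φ^(-(k:ℤ))) t with hb
  have hanti : Antitone b := fun i j hij =>
    (orbit_strictMono φ ht).monotone (by simp; exact_mod_cast hij)
  have hbdd : BddBelow (Set.range b) := ⟨y, by rintro _ ⟨k, rfl⟩; exact hc k⟩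
  set L := ⨅ k, b k with hL
  have hstep : ∀ k : ℕ, φ (b (k+1)) = b k := by
    intro k
    show φ ((φ^(-((k+1:ℕ):ℤ))) t) = (φ^(-(k:ℤ))) t
    rw [show -((k+1:ℕ):ℤ) = -(k:ℤ) - 1 by push_cast; ring]
    rw [show (φ^(-(k:ℤ))) t = (φ^(-(k:ℤ)-1+1)) t by norm_num]
    rw [zpow_succ_apply']
  have hφL : φ L = L := by
    have h1 : φ L = ⨅ k, φ (b k) :=
      Monotone.map_ciInf_of_continuousAt (φ.continuous.continuousAt) φ.monotone hbdd
    rw [h1]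
    have hbddc : BddBelow (Set.range (fun j => φ (b j))) := by
      refine ⟨y, ?_⟩
      rintro _ ⟨j, rfl⟩
      show y ≤ φ (b j)
      have hbj : b j ∈ IncPts φ := sign_const φ ht (zpow_mem_comp φ htF _)
      exact (hc j).trans hbj.out.le
    apply le_antisymm
    · apply le_ciInf
      intro k
      calc (⨅ j, φ (b j)) ≤ φ (b (k+1)) := ciInf_le hbddc (k+1)
      _ = b k := hstep k
    · apply le_ciInf
      intro k
      have hbk : b k ∈ IncPts φ := sign_const φ ht (zpow_mem_comp φ htF _)
      calc L ≤ b k := ciInf_le hbdd k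
      _ ≤ φ (b k) := hbk.out.le
  have hLF : L ∈ FixedPts φ := hφL
  have hLt : L ≤ t := by
    have : L ≤ b 0 := ciInf_le hbdd 0
    simpa [hb] using this
  have hyL : y ≤ L := le_ciInf hc
  have : L ∈ Set.uIcc t y ∩ FixedPts φ := ⟨Set.mem_uIcc.2 (Or.inr ⟨hyL, hLt⟩), hLF⟩
  simp only [Comp, mem_setOf_eq] at hy
  rw [hy] at this; exact this

open Classical in
/-- The base point of a component. -/
def basePt (s : Set ℝ) : ℝ := if h : s.Nonempty then h.choose else 0

lemma basePt_mem {s : Set ℝ} (h : s.Nonempty) : basePt s ∈ s := by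
  rw [basePt, dif_pos h]; exact h.choose_spec

open Classical in
/-- The greatest `n` with `(φ^n) t ≤ x`. -/
def nIdx (φ : ℝ ≃o ℝ) (t x : ℝ) : ℤ :=
  if h : ∃ n : ℤ, ((φ^n) t ≤ x ∧ ∀ m : ℤ, (φ^m) t ≤ x → m ≤ n) then h.choose else 0

lemma nIdx_spec (φ : ℝ ≃o ℝ) {t x : ℝ} (ht : t ∈ IncPts φ) (htF : t ∉ FixedPts φ)
    (hx : x ∈ Comp (FixedPts φ) t) :
    (φ^(nIdx φ t x)) t ≤ x ∧ x < (φ^(nIdx φ t x + 1)) t := by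
  obtain ⟨k₁, hk₁⟩ := escape_up φ ht htF hx
  obtain ⟨k₂, hk₂⟩ := escape_down φ ht htF hx
  have hbd : ∃ b : ℤ, ∀ z : ℤ, (φ^z) t ≤ x → z ≤ b := by
    refine ⟨k₁, fun z hz => ?_⟩
    by_contra hzb
    push_neg at hzb
    have := (orbit_strictMono φ ht) hzb
    exact absurd (hz.trans_lt hk₁).le (not_le.2 this)
  have hne : ∃ z : ℤ, (φ^z) t ≤ x := ⟨-(k₂:ℤ), hk₂.le⟩
  obtain ⟨n, hn1, hn2⟩ := Int.exists_greatest_of_bdd hbd hne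
  have hex : ∃ n : ℤ, ((φ^n) t ≤ x ∧ ∀ m : ℤ, (φ^m) t ≤ x → m ≤ n) := ⟨n, hn1, hn2⟩
  rw [nIdx, dif_pos hex]
  obtain ⟨h1, h2⟩ := hex.choose_spec
  refine ⟨h1, ?_⟩
  by_contra hc
  push_neg at hc
  have := h2 _ hc
  omega

lemma nIdx_eq (φ : ℝ ≃o ℝ) {t x : ℝ} (ht : t ∈ IncPts φ) (htF : t ∉ FixedPts φ)
    (hx : x ∈ Comp (FixedPts φ) t) {n : ℤ} (h1 : (φ^n) t ≤ x) (h2 : x < (φ^(n+1)) t) :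
    nIdx φ t x = n := by
  obtain ⟨g1, g2⟩ := nIdx_spec φ ht htF hx
  set m := nIdx φ t x
  rcases lt_trichotomy m n with h | h | h
  · have hmn : m + 1 ≤ n := by omega
    have := (orbit_strictMono φ ht).monotone hmn
    exact absurd (h1.trans_lt g2) (not_lt.2 this)
  · exact h
  · have hmn : n + 1 ≤ m := by omega
    have := (orbit_strictMono φ ht).monotone hmn
    exact absurd (g1.trans_lt h2) (not_lt.2 this)

/-- Affine interpolation sending `t ↦ t` and `u ↦ v`. -/
def aff (t u v x : ℝ) : ℝ := t + (x - t) * (v - t) / (u - t)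

lemma aff_self (t u v : ℝ) : aff t u v t = t := by simp [aff]

lemma aff_right {t u v : ℝ} (hu : t ≠ u) : aff t u v u = v := by
  unfold aff
  field_simp [aff, sub_ne_zero.2 (Ne.symm hu)]
  ring

lemma aff_strictMono {t u v : ℝ} (hu : t < u) (hv : t < v) : StrictMono (aff t u v) := by
  intro a b hab
  simp only [aff]
  have h1 : (0:ℝ) < u - t := by linarith
  have h2 : (0:ℝ) < v - t := by linarith
  have h3 : (a - t) * (v - t) < (b - t) * (v - t) := by nlinarith
  have h4 := div_lt_div_of_pos_right h3 h1
  linarith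

lemma aff_inv {t u v : ℝ} (hu : t ≠ u) (hv : t ≠ v) (w : ℝ) :
    aff t u v (aff t v u w) = w := by
  have h1 : u - t ≠ 0 := sub_ne_zero.2 (Ne.symm hu)
  have h2 : v - t ≠ 0 := sub_ne_zero.2 (Ne.symm hv)
  unfold aff
  field_simp [aff]
  ring

lemma zpow_neg_apply' (f : ℝ ≃o ℝ) (n : ℤ) (x : ℝ) : (f^(-n)) ((f^n) x) = x := by
  rw [← mul_apply, ← zpow_add, neg_add_cancel, zpow_zero]; rfl

lemma zpow_neg_succ_apply (f : ℝ ≃o ℝ) (n : ℤ) (x : ℝ) :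
    (f^(-n)) ((f^(n+1)) x) = f x := by
  rw [← mul_apply, ← zpow_add, show -n + (n+1) = 1 by ring, zpow_one]

/-- The conjugating map on an increasing component. -/
def halfMap (φ ρ : ℝ ≃o ℝ) (x : ℝ) : ℝ :=
  (ρ^(nIdx φ (basePt (Comp (FixedPts φ) x)) x))
    (aff (basePt (Comp (FixedPts φ) x)) (φ (basePt (Comp (FixedPts φ) x)))
      (ρ (basePt (Comp (FixedPts φ) x)))
      ((φ^(-(nIdx φ (basePt (Comp (FixedPts φ) x)) x))) x))

section Half

variable {φ ρ : ℝ ≃o ℝ} (hF : FixedPts ρ = FixedPts φ) (hI : IncPts ρ = IncPts φ)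

lemma basePt_comp_mem {x : ℝ} (hxF : x ∉ FixedPts φ) :
    basePt (Comp (FixedPts φ) x) ∈ Comp (FixedPts φ) x :=
  basePt_mem ⟨x, self_mem_comp hxF⟩

include hF hI in
lemma halfMap_bounds {x : ℝ} (hxF : x ∉ FixedPts φ) (hxI : x ∈ IncPts φ) :
    (ρ^(nIdx φ (basePt (Comp (FixedPts φ) x)) x)) (basePt (Comp (FixedPts φ) x)) ≤
        halfMap φ ρ x ∧
      halfMap φ ρ x < (ρ^(nIdx φ (basePt (Comp (FixedPts φ) x)) x + 1))
        (basePt (Comp (FixedPts φ) x)) := by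
  set t := basePt (Comp (FixedPts φ) x) with htdef
  have htc : t ∈ Comp (FixedPts φ) x := basePt_comp_mem hxF
  have htF : t ∉ FixedPts φ := not_mem_F_of_mem_comp htc
  have htI : t ∈ IncPts φ := sign_const φ hxI htc
  have htIρ : t ∈ IncPts ρ := hI ▸ htI
  have hxc : x ∈ Comp (FixedPts φ) t := comp_symm htc
  set n := nIdx φ t x with hndef
  obtain ⟨h1, h2⟩ := nIdx_spec φ htI htF hxc
  set u := (φ^(-n)) x with hudef
  have hu1 : t ≤ u := by
    have := (φ^(-n)).monotone h1
    rwa [zpow_neg_apply'] at this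
  have hu2 : u < φ t := by
    have := (φ^(-n)).strictMono h2
    rwa [zpow_neg_succ_apply] at this
  have hA := aff_strictMono (u := φ t) (v := ρ t) htI.out htIρ.out
  have hAt : aff t (φ t) (ρ t) t = t := aff_self ..
  have hAu1 : t ≤ aff t (φ t) (ρ t) u := by
    rcases eq_or_lt_of_le hu1 with h | h
    · rw [← h, hAt]
    · exact (hAt ▸ hA h).le
  have hAu2 : aff t (φ t) (ρ t) u < ρ t := by
    have := hA hu2
    rwa [aff_right (ne_of_lt htI.out)] at this
  constructor
  · exact (ρ^n).monotone hAu1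
  · have := (ρ^n).strictMono hAu2
    rwa [← zpow_succ_apply] at this

include hF hI in
lemma halfMap_mem_comp {x : ℝ} (hxF : x ∉ FixedPts φ) (hxI : x ∈ IncPts φ) :
    halfMap φ ρ x ∈ Comp (FixedPts φ) x := by
  obtain ⟨h1, h2⟩ := halfMap_bounds hF hI hxF hxI
  set t := basePt (Comp (FixedPts φ) x) with htdef
  have htc : t ∈ Comp (FixedPts φ) x := basePt_comp_mem hxF
  have htF : t ∉ FixedPts φ := not_mem_F_of_mem_comp htc
  have htFρ : t ∉ FixedPts ρ := hF ▸ htF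
  set n := nIdx φ t x
  have hm1 : (ρ^n) t ∈ Comp (FixedPts φ) t := hF ▸ zpow_mem_comp ρ htFρ n
  have hm2 : (ρ^(n+1)) t ∈ Comp (FixedPts φ) t := hF ▸ zpow_mem_comp ρ htFρ (n+1)
  have : halfMap φ ρ x ∈ Comp (FixedPts φ) t :=
    mem_comp_of_between hm1 hm2 h1 h2.le
  rwa [comp_congr htc] at this

include hF hI in
lemma halfMap_strictMono {x y : ℝ} (hxF : x ∉ FixedPts φ) (hxI : x ∈ IncPts φ)
    (hxy : x < y) (hyc : y ∈ Comp (FixedPts φ) x) :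
    halfMap φ ρ x < halfMap φ ρ y := by
  have hyF : y ∉ FixedPts φ := not_mem_F_of_mem_comp hyc
  have hyI : y ∈ IncPts φ := sign_const φ hxI hyc
  have hcc : Comp (FixedPts φ) y = Comp (FixedPts φ) x := comp_congr hyc
  set t := basePt (Comp (FixedPts φ) x) with htdef
  have htc : t ∈ Comp (FixedPts φ) x := basePt_comp_mem hxF
  have htF : t ∉ FixedPts φ := not_mem_F_of_mem_comp htc
  have htI : t ∈ IncPts φ := sign_const φ hxI htc
  have htIρ : t ∈ IncPts ρ := hI ▸ htI
  have hxc : x ∈ Comp (FixedPts φ) t := comp_symm htc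
  have hyc' : y ∈ Comp (FixedPts φ) t := comp_trans (comp_symm htc) hyc
  set n := nIdx φ t x with hndef
  set m := nIdx φ t y with hmdef
  obtain ⟨hx1, hx2⟩ := nIdx_spec φ htI htF hxc
  obtain ⟨hy1, hy2⟩ := nIdx_spec φ htI htF hyc'
  have hbx := halfMap_bounds hF hI hxF hxI
  have hby := halfMap_bounds hF hI hyF hyI
  rw [show basePt (Comp (FixedPts φ) y) = t by rw [hcc]] at hby
  rw [show nIdx φ t y = m from rfl] at hby
  have hnm : n ≤ m := by
    by_contra hc
    push_neg at hc
    have h3 : (φ^(m+1)) t ≤ (φ^n) t := (orbit_strictMono φ htI).monotone (by omega)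
    exact absurd (hy2.trans_le (h3.trans hx1)) (not_lt.2 hxy.le)
  rcases eq_or_lt_of_le hnm with heq | hlt
  · -- same fundamental domain
    show (ρ^n) (aff t (φ t) (ρ t) ((φ^(-n)) x)) <
      (ρ^(nIdx φ (basePt (Comp (FixedPts φ) y)) y))
        (aff (basePt (Comp (FixedPts φ) y)) _ _ ((φ^(-(nIdx φ (basePt (Comp (FixedPts φ) y)) y))) y))
    rw [hcc, ← htdef, ← hmdef, ← heq]
    apply (ρ^n).strictMono
    have hA := aff_strictMono (u := φ t) (v := ρ t) htI.out htIρ.out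
    exact hA ((φ^(-n)).strictMono hxy)
  · -- different fundamental domains
    have e1 : halfMap φ ρ x < (ρ^(n+1)) t := hbx.2
    have e2 : (ρ^m) t ≤ halfMap φ ρ y := hby.1
    have e3 : (ρ^(n+1)) t ≤ (ρ^m) t := (orbit_strictMono ρ htIρ).monotone (by omega)
    linarith

include hF hI in
lemma halfMap_equivariant {x : ℝ} (hxF : x ∉ FixedPts φ) (hxI : x ∈ IncPts φ) :
    halfMap φ ρ (φ x) = ρ (halfMap φ ρ x) := by
  have hpF : φ x ∉ FixedPts φ := not_fixed_apply φ hxF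
  have hpc : φ x ∈ Comp (FixedPts φ) x := step_mem_comp φ hxF
  have hcc : Comp (FixedPts φ) (φ x) = Comp (FixedPts φ) x := comp_congr hpc
  set t := basePt (Comp (FixedPts φ) x) with htdef
  have htc : t ∈ Comp (FixedPts φ) x := basePt_comp_mem hxF
  have htF : t ∉ FixedPts φ := not_mem_F_of_mem_comp htc
  have htI : t ∈ IncPts φ := sign_const φ hxI htc
  have hxc : x ∈ Comp (FixedPts φ) t := comp_symm htc
  have hpc' : φ x ∈ Comp (FixedPts φ) t := comp_trans (comp_symm htc) hpc
  set n := nIdx φ t x with hndef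
  obtain ⟨h1, h2⟩ := nIdx_spec φ htI htF hxc
  have hn' : nIdx φ t (φ x) = n + 1 := by
    apply nIdx_eq φ htI htF hpc'
    · rw [zpow_succ_apply']
      exact φ.monotone h1
    · rw [zpow_succ_apply' (n := n+1)]
      exact φ.strictMono h2
  show (ρ^(nIdx φ (basePt (Comp (FixedPts φ) (φ x))) (φ x)))
      (aff (basePt (Comp (FixedPts φ) (φ x))) _ _
        ((φ^(-(nIdx φ (basePt (Comp (FixedPts φ) (φ x))) (φ x)))) (φ x))) = _
  rw [hcc, ← htdef, hn']
  have harg : (φ^(-(n+1))) (φ x) = (φ^(-n)) x := by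
    rw [← zpow_succ_apply, show -(n+1)+1 = -n by ring]
  rw [harg, zpow_succ_apply']
  rfl

include hF hI in
lemma halfMap_surj {y : ℝ} (hyF : y ∉ FixedPts φ) (hyI : y ∈ IncPts φ) :
    ∃ x, x ∉ FixedPts φ ∧ x ∈ IncPts φ ∧ halfMap φ ρ x = y := by
  set t := basePt (Comp (FixedPts φ) y) with htdef
  have htc : t ∈ Comp (FixedPts φ) y := basePt_comp_mem hyF
  have htF : t ∉ FixedPts φ := not_mem_F_of_mem_comp htc
  have htI : t ∈ IncPts φ := sign_const φ hyI htc
  have htIρ : t ∈ IncPts ρ := hI ▸ htI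
  have htFρ : t ∉ FixedPts ρ := hF ▸ htF
  have hyc : y ∈ Comp (FixedPts φ) t := comp_symm htc
  have hycρ : y ∈ Comp (FixedPts ρ) t := hF ▸ hyc
  set m := nIdx ρ t y with hmdef
  obtain ⟨h1, h2⟩ := nIdx_spec ρ htIρ htFρ hycρ
  set v := (ρ^(-m)) y with hvdef
  have hv1 : t ≤ v := by
    have := (ρ^(-m)).monotone h1
    rwa [zpow_neg_apply'] at this
  have hv2 : v < ρ t := by
    have := (ρ^(-m)).strictMono h2
    rwa [zpow_neg_succ_apply] at this
  set u := aff t (ρ t) (φ t) v with hudef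
  have hA := aff_strictMono (u := ρ t) (v := φ t) htIρ.out htI.out
  have hu1 : t ≤ u := by
    rcases eq_or_lt_of_le hv1 with h | h
    · rw [hudef, ← h, aff_self]
    · exact (aff_self t (ρ t) (φ t) ▸ hA h).le
  have hu2 : u < φ t := by
    have := hA hv2
    rwa [aff_right (ne_of_lt htIρ.out)] at this
  set x := (φ^m) u with hxdef
  have hx1 : (φ^m) t ≤ x := (φ^m).monotone hu1
  have hx2 : x < (φ^(m+1)) t := by
    have := (φ^m).strictMono hu2
    rwa [← zpow_succ_apply] at this
  have hxc : x ∈ Comp (FixedPts φ) t :=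
    mem_comp_of_between (zpow_mem_comp φ htF m) (zpow_mem_comp φ htF (m+1)) hx1 hx2.le
  have hxF : x ∉ FixedPts φ := not_mem_F_of_mem_comp hxc
  have hxI : x ∈ IncPts φ := sign_const φ htI hxc
  refine ⟨x, hxF, hxI, ?_⟩
  have hccx : Comp (FixedPts φ) x = Comp (FixedPts φ) t := comp_congr hxc
  have hccy : Comp (FixedPts φ) y = Comp (FixedPts φ) t := comp_congr hyc
  have hnx : nIdx φ t x = m := nIdx_eq φ htI htF hxc hx1 hx2
  show (ρ^(nIdx φ (basePt (Comp (FixedPts φ) x)) x))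
      (aff (basePt (Comp (FixedPts φ) x)) _ _
        ((φ^(-(nIdx φ (basePt (Comp (FixedPts φ) x)) x))) x)) = y
  rw [hccx, ← hccy, ← htdef, hnx]
  have harg : (φ^(-m)) x = u := zpow_neg_apply' φ m u
  rw [harg, hudef, aff_inv (ne_of_lt htI.out) (ne_of_lt htIρ.out), hvdef, zpow_neg_apply]

end Half

lemma inc_inv_mem {φ : ℝ ≃o ℝ} {x : ℝ} : x ∈ IncPts φ⁻¹ ↔ φ x < x := by
  simp only [IncPts, mem_setOf_eq, inv_apply]
  constructor
  · intro h
    have := φ.strictMono h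
    rwa [φ.apply_symm_apply] at this
  · intro h
    have := φ.symm.strictMono h
    rwa [φ.symm_apply_apply] at this

lemma inc_inv (φ : ℝ ≃o ℝ) : IncPts φ⁻¹ = (FixedPts φ ∪ IncPts φ)ᶜ := by
  ext x
  rw [mem_compl_iff, mem_union, inc_inv_mem]
  simp only [FixedPts, IncPts, mem_setOf_eq]
  constructor
  · intro h
    push_neg
    exact ⟨ne_of_lt h, h.le⟩
  · intro h
    push_neg at h
    exact lt_of_le_of_ne h.2 h.1

open Classical in
/-- The global conjugating map. -/
def conjMap (φ ρ : ℝ ≃o ℝ) (x : ℝ) : ℝ :=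
  if x ∈ FixedPts φ then x else if x ∈ IncPts φ then halfMap φ ρ x else halfMap φ⁻¹ ρ⁻¹ x

section Glob

variable {φ ρ : ℝ ≃o ℝ} (hF : FixedPts ρ = FixedPts φ) (hI : IncPts ρ = IncPts φ)

include hF hI

lemma hF' : FixedPts ρ⁻¹ = FixedPts φ⁻¹ := by rw [fixed_inv, fixed_inv, hF]

lemma hI' : IncPts ρ⁻¹ = IncPts φ⁻¹ := by rw [inc_inv, inc_inv, hF, hI]

lemma dec_of_not {x : ℝ} (hxF : x ∉ FixedPts φ) (hxI : x ∉ IncPts φ) :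
    x ∈ IncPts φ⁻¹ := by
  rw [inc_inv]
  simp [hxF, hxI]

lemma conj_mem_comp {x : ℝ} (hxF : x ∉ FixedPts φ) :
    conjMap φ ρ x ∈ Comp (FixedPts φ) x := by
  rw [conjMap, if_neg hxF]
  by_cases hxI : x ∈ IncPts φ
  · rw [if_pos hxI]
    exact halfMap_mem_comp hF hI hxF hxI
  · rw [if_neg hxI]
    have h1 : x ∉ FixedPts φ⁻¹ := (fixed_inv φ) ▸ hxF
    have h2 : x ∈ IncPts φ⁻¹ := dec_of_not hF hI hxF hxI
    have := halfMap_mem_comp (hF' hF hI) (hI' hF hI) h1 h2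
    rwa [fixed_inv] at this

lemma conj_fixed {x : ℝ} (hxF : x ∈ FixedPts φ) : conjMap φ ρ x = x := by
  rw [conjMap, if_pos hxF]

lemma conj_strictMono : StrictMono (conjMap φ ρ) := by
  intro x y hxy
  by_cases hxF : x ∈ FixedPts φ
  · rw [conj_fixed hF hI hxF]
    by_cases hyF : y ∈ FixedPts φ
    · rw [conj_fixed hF hI hyF]; exact hxy
    · -- x fixed, y not : x ∉ uIcc y (conj y)
      have hc := conj_mem_comp hF hI hyF
      by_contra hle
      push_neg at hle
      have : x ∈ Set.uIcc y (conjMap φ ρ y) ∩ FixedPts φ :=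
        ⟨Set.mem_uIcc.2 (Or.inr ⟨hle, hxy.le⟩), hxF⟩
      simpa [Comp, Set.eq_empty_iff_forall_notMem.1 hc x] using this
  · by_cases hyF : y ∈ FixedPts φ
    · rw [conj_fixed hF hI hyF]
      have hc := conj_mem_comp hF hI hxF
      by_contra hle
      push_neg at hle
      have : y ∈ Set.uIcc x (conjMap φ ρ x) ∩ FixedPts φ :=
        ⟨Set.mem_uIcc.2 (Or.inl ⟨hxy.le, hle⟩), hyF⟩
      simpa [Comp, Set.eq_empty_iff_forall_notMem.1 hc y] using this
    · by_cases hsame : y ∈ Comp (FixedPts φ) x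
      · -- same component
        by_cases hxI : x ∈ IncPts φ
        · have hyI : y ∈ IncPts φ := sign_const φ hxI hsame
          rw [conjMap, if_neg hxF, if_pos hxI, conjMap, if_neg hyF, if_pos hyI]
          exact halfMap_strictMono hF hI hxF hxI hxy hsame
        · have hxI' : x ∈ IncPts φ⁻¹ := dec_of_not hF hI hxF hxI
          have hsame' : y ∈ Comp (FixedPts φ⁻¹) x := (fixed_inv φ).symm ▸ hsame
          have hyI' : y ∈ IncPts φ⁻¹ := sign_const φ⁻¹ hxI' hsame'
          have hyI : y ∉ IncPts φ := by
            rw [inc_inv] at hyI'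
            intro hc
            exact hyI' (Or.inr hc)
          have hxF' : x ∉ FixedPts φ⁻¹ := (fixed_inv φ) ▸ hxF
          rw [conjMap, if_neg hxF, if_neg hxI, conjMap, if_neg hyF, if_neg hyI]
          exact halfMap_strictMono (hF' hF hI) (hI' hF hI) hxF' hxI' hxy hsame'
      · -- different components
        have hne : (Set.uIcc x y ∩ FixedPts φ).Nonempty := by
          rw [Set.nonempty_iff_ne_empty]
          exact hsame
        obtain ⟨z, hz1, hz2⟩ := hne
        rw [Set.uIcc_of_le hxy.le] at hz1
        have hzx : x < z := lt_of_le_of_ne hz1.1 (fun h => hxF (h ▸ hz2))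
        have hzy : z < y := lt_of_le_of_ne hz1.2 (fun h => hyF (h ▸ hz2))
        have hcx := conj_mem_comp hF hI hxF
        have hcy := conj_mem_comp hF hI hyF
        have e1 : conjMap φ ρ x < z := by
          by_contra hle
          push_neg at hle
          have : z ∈ Set.uIcc x (conjMap φ ρ x) ∩ FixedPts φ :=
            ⟨Set.mem_uIcc.2 (Or.inl ⟨hzx.le, hle⟩), hz2⟩
          simpa [Comp, Set.eq_empty_iff_forall_notMem.1 hcx z] using this
        have e2 : z < conjMap φ ρ y := by
          by_contra hle
          push_neg at hle
          have : z ∈ Set.uIcc y (conjMap φ ρ y) ∩ FixedPts φ :=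
            ⟨Set.mem_uIcc.2 (Or.inr ⟨hle, hzy.le⟩), hz2⟩
          simpa [Comp, Set.eq_empty_iff_forall_notMem.1 hcy z] using this
        exact e1.trans e2

lemma conj_surj : Function.Surjective (conjMap φ ρ) := by
  intro y
  by_cases hyF : y ∈ FixedPts φ
  · exact ⟨y, conj_fixed hF hI hyF⟩
  · by_cases hyI : y ∈ IncPts φ
    · obtain ⟨x, hxF, hxI, hx⟩ := halfMap_surj hF hI hyF hyI
      exact ⟨x, by rw [conjMap, if_neg hxF, if_pos hxI, hx]⟩
    · have hyF' : y ∉ FixedPts φ⁻¹ := (fixed_inv φ) ▸ hyF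
      have hyI' : y ∈ IncPts φ⁻¹ := dec_of_not hF hI hyF hyI
      obtain ⟨x, hxF', hxI', hx⟩ := halfMap_surj (hF' hF hI) (hI' hF hI) hyF' hyI'
      have hxF : x ∉ FixedPts φ := (fixed_inv φ).symm ▸ hxF'
      have hxI : x ∉ IncPts φ := by
        rw [inc_inv] at hxI'
        intro hc
        exact hxI' (Or.inr hc)
      exact ⟨x, by rw [conjMap, if_neg hxF, if_neg hxI, hx]⟩

lemma conj_equivariant (x : ℝ) : conjMap φ ρ (φ x) = ρ (conjMap φ ρ x) := by
  by_cases hxF : x ∈ FixedPts φ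
  · have hρ : ρ x = x := (hF ▸ hxF : x ∈ FixedPts ρ)
    rw [hxF.out, conj_fixed hF hI hxF, hρ]
  · by_cases hxI : x ∈ IncPts φ
    · have hpF : φ x ∉ FixedPts φ := not_fixed_apply φ hxF
      have hpI : φ x ∈ IncPts φ := sign_const φ hxI (step_mem_comp φ hxF)
      rw [conjMap, if_neg hpF, if_pos hpI, conjMap, if_neg hxF, if_pos hxI]
      exact halfMap_equivariant hF hI hxF hxI
    · have hxF' : x ∉ FixedPts φ⁻¹ := (fixed_inv φ) ▸ hxF
      have hxI' : x ∈ IncPts φ⁻¹ := dec_of_not hF hI hxF hxI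
      have hpF : φ x ∉ FixedPts φ := not_fixed_apply φ hxF
      have hpF' : φ x ∉ FixedPts φ⁻¹ := (fixed_inv φ) ▸ hpF
      have hpc : φ x ∈ Comp (FixedPts φ⁻¹) x := (fixed_inv φ).symm ▸ step_mem_comp φ hxF
      have hpI' : φ x ∈ IncPts φ⁻¹ := sign_const φ⁻¹ hxI' hpc
      have hpI : φ x ∉ IncPts φ := by
        rw [inc_inv] at hpI'
        intro hc
        exact hpI' (Or.inr hc)
      rw [conjMap, if_neg hpF, if_neg hpI, conjMap, if_neg hxF, if_neg hxI]
      have key := halfMap_equivariant (hF' hF hI) (hI' hF hI) (x := φ x) hpF' hpI'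
      have hinv : φ⁻¹ (φ x) = x := by
        rw [inv_apply, φ.symm_apply_apply]
      rw [hinv] at key
      rw [key, ← mul_apply, mul_inv_cancel]
      rfl

lemma conj_exists : ∃ χ : ℝ ≃o ℝ, χ * φ * χ⁻¹ = ρ := by
  set χ := StrictMono.orderIsoOfSurjective (conjMap φ ρ) (conj_strictMono hF hI)
    (conj_surj hF hI) with hχ
  have hχapp : ∀ x, χ x = conjMap φ ρ x := fun _ => rfl
  refine ⟨χ, ?_⟩
  apply OrderIso.ext
  funext x
  show χ (φ (χ⁻¹ x)) = ρ x
  rw [hχapp, conj_equivariant hF hI, ← hχapp]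
  congr 1
  show χ (χ⁻¹ x) = x
  rw [← mul_apply, mul_inv_cancel]
  rfl

end Glob

end
end WeakConjAux


/-- If some `ψ ∈ Homeo₊(ℝ)` matches the fixed sets and increasing sets of `φ₁` and `φ₂`,
then `φ₁` and `φ₂` are conjugate in `Homeo₊(ℝ)`. -/
theorem weak_conjugation_implies_conjugation (φ₁ φ₂ : ℝ ≃o ℝ)
    (h : ∃ ψ : ℝ ≃o ℝ, ψ '' FixedPts φ₁ = FixedPts φ₂ ∧ ψ '' IncPts φ₁ = IncPts φ₂) :
    ∃ ψb : ℝ ≃o ℝ, ψb * φ₁ * ψb⁻¹ = φ₂ := by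
  obtain ⟨ψ, h1, h2⟩ := h
  set ρ : ℝ ≃o ℝ := ψ⁻¹ * φ₂ * ψ with hρ
  have happ : ∀ x, ρ x = ψ.symm (φ₂ (ψ x)) := fun _ => rfl
  have hF : FixedPts ρ = FixedPts φ₁ := by
    ext x
    simp only [FixedPts, Set.mem_setOf_eq, happ]
    constructor
    · intro hx
      have hfix : φ₂ (ψ x) = ψ x := by
        have := congrArg ψ hx
        rwa [ψ.apply_symm_apply] at this
      have hmem : ψ x ∈ FixedPts φ₂ := hfix
      rw [← h1] at hmem
      obtain ⟨z, hz, hzx⟩ := hmem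
      have : z = x := ψ.injective hzx
      exact this ▸ hz
    · intro hx
      have hmem : ψ x ∈ ψ '' FixedPts φ₁ := ⟨x, hx, rfl⟩
      rw [h1] at hmem
      have : φ₂ (ψ x) = ψ x := hmem
      rw [this, ψ.symm_apply_apply]
  have hI : IncPts ρ = IncPts φ₁ := by
    ext x
    simp only [IncPts, Set.mem_setOf_eq, happ]
    have hiff : x < ψ.symm (φ₂ (ψ x)) ↔ ψ x < φ₂ (ψ x) := by
      rw [← ψ.lt_iff_lt, ψ.apply_symm_apply]
    rw [hiff]
    constructor
    · intro hx
      have hmem : ψ x ∈ IncPts φ₂ := hx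
      rw [← h2] at hmem
      obtain ⟨z, hz, hzx⟩ := hmem
      have : z = x := ψ.injective hzx
      exact this ▸ hz
    · intro hx
      have hmem : ψ x ∈ ψ '' IncPts φ₁ := ⟨x, hx, rfl⟩
      rw [h2] at hmem
      exact hmem
  obtain ⟨χ, hχ⟩ := WeakConjAux.conj_exists hF hI
  refine ⟨ψ * χ, ?_⟩
  have e1 : (ψ * χ) * φ₁ * (ψ * χ)⁻¹ = ψ * (χ * φ₁ * χ⁻¹) * ψ⁻¹ := by group
  rw [e1, hχ, hρ]
  group
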